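/- arXiv:1810.08671 — 4 statements merged into one kernel-verified Lean document; each statement's English description precedes it below -/
import Mathlib

section
/- Let m, n, p be natural numbers with p ≥ m and p ≥ n. Then the number of pairs of integers (i,j) with |i| ≤ m, |j| ≤ n, and |i+j| ≤ p is at least (3/4)·(2m+1)·(2n+1). -/
open Finset

/-- The discrete triangle `{(a,b) : a + b < s}` has `s*(s+1)/2` elements. -/
lemma strassen_triangle_card (s : ℕ) :
    2 * ((Finset.range s).biUnion (fun k => Finset.HasAntidiagonal.antidiagonal k)).card = s * (s + 1) := by
  rw [Finset.card_biUnion]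
  · have h : ∑ k ∈ Finset.range s, (Finset.HasAntidiagonal.antidiagonal k).card
        = ∑ k ∈ Finset.range s, (k + 1) := by
      simp [Finset.Nat.card_antidiagonal]
    rw [h]
    clear h
    induction s with
    | zero => simp
    | succ t ih =>
      rw [Finset.sum_range_succ, Nat.mul_add, ih]
      ring
  · intro x _ y _ hxy
    simp only [Finset.disjoint_left]
    intro a ha hb
    simp only [Finset.HasAntidiagonal.mem_antidiagonal] at ha hb
    omega

/-- At least a `3/4` fraction of the pairs `(i,j) ∈ [-m,m] × [-n,n]` satisfy
`|i + j| ≤ p`, provided `p ≥ m` and `p ≥ n`. -/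
theorem strassen_surviving_pairs (m n p : ℕ) (hm : m ≤ p) (hn : n ≤ p) :
    3 * (2 * m + 1) * (2 * n + 1) ≤
      4 * (((Finset.Icc (-(m : ℤ)) m) ×ˢ (Finset.Icc (-(n : ℤ)) n)).filter
        (fun ij => |ij.1 + ij.2| ≤ (p : ℤ))).card := by
  classical
  set S : Finset (ℤ × ℤ) := (Finset.Icc (-(m : ℤ)) m) ×ˢ (Finset.Icc (-(n : ℤ)) n) with hSdef
  set s : ℕ := m + n - p with hs
  set T : Finset (ℕ × ℕ) := (Finset.range s).biUnion (fun k => Finset.HasAntidiagonal.antidiagonal k)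
    with hT
  -- total cardinality
  have hcardS : S.card = (2 * m + 1) * (2 * n + 1) := by
    rw [hSdef, Finset.card_product, Int.card_Icc, Int.card_Icc]
    have h1 : ((m : ℤ) + 1 - -(m : ℤ)).toNat = 2 * m + 1 := by omega
    have h2 : ((n : ℤ) + 1 - -(n : ℤ)).toNat = 2 * n + 1 := by omega
    rw [h1, h2]
  -- split into good and bad
  have hsplit := Finset.card_filter_add_card_filter_not
    (s := S) (p := fun ij : ℤ × ℤ => |ij.1 + ij.2| ≤ (p : ℤ))
  -- bad pairs are contained in two half-planes
  have hsub : S.filter (fun ij : ℤ × ℤ => ¬ |ij.1 + ij.2| ≤ (p : ℤ)) ⊆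
      S.filter (fun ij : ℤ × ℤ => (p : ℤ) < ij.1 + ij.2) ∪
      S.filter (fun ij : ℤ × ℤ => ij.1 + ij.2 < -(p : ℤ)) := by
    intro ij hij
    simp only [Finset.mem_filter, Finset.mem_union] at hij ⊢
    rcases hij with ⟨hmem, habs⟩
    rcases lt_abs.mp (not_le.mp habs) with h | h
    · exact Or.inl ⟨hmem, by omega⟩
    · exact Or.inr ⟨hmem, by omega⟩
  -- the upper half-plane injects into the triangle
  have hA : (S.filter (fun ij : ℤ × ℤ => (p : ℤ) < ij.1 + ij.2)).card ≤ T.card := by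
    apply Finset.card_le_card_of_injOn
      (fun ij => (((m : ℤ) - ij.1).toNat, ((n : ℤ) - ij.2).toNat))
    · intro ij hij
      simp only [Finset.mem_coe, Finset.mem_filter, hSdef, Finset.mem_product, Finset.mem_Icc] at hij
      obtain ⟨⟨⟨hi1, hi2⟩, hj1, hj2⟩, hsum⟩ := hij
      simp only [hT, Finset.mem_coe, Finset.mem_biUnion, Finset.mem_range, Finset.HasAntidiagonal.mem_antidiagonal]
      refine ⟨((m : ℤ) - ij.1).toNat + ((n : ℤ) - ij.2).toNat, by omega, rfl⟩
    · intro a ha b hb hab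
      simp only [Finset.mem_coe, Finset.mem_filter, hSdef, Finset.mem_product,
        Finset.mem_Icc] at ha hb
      obtain ⟨⟨⟨ha1, ha2⟩, ha3, ha4⟩, _⟩ := ha
      obtain ⟨⟨⟨hb1, hb2⟩, hb3, hb4⟩, _⟩ := hb
      have h1 := congrArg Prod.fst hab
      have h2 := congrArg Prod.snd hab
      simp only at h1 h2
      have : a.1 = b.1 := by omega
      have : a.2 = b.2 := by omega
      exact Prod.ext (by omega) (by omega)
  -- the lower half-plane injects into the triangle
  have hB : (S.filter (fun ij : ℤ × ℤ => ij.1 + ij.2 < -(p : ℤ))).card ≤ T.card := by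
    apply Finset.card_le_card_of_injOn
      (fun ij => (((m : ℤ) + ij.1).toNat, ((n : ℤ) + ij.2).toNat))
    · intro ij hij
      simp only [Finset.mem_coe, Finset.mem_filter, hSdef, Finset.mem_product, Finset.mem_Icc] at hij
      obtain ⟨⟨⟨hi1, hi2⟩, hj1, hj2⟩, hsum⟩ := hij
      simp only [hT, Finset.mem_coe, Finset.mem_biUnion, Finset.mem_range, Finset.HasAntidiagonal.mem_antidiagonal]
      refine ⟨((m : ℤ) + ij.1).toNat + ((n : ℤ) + ij.2).toNat, by omega, rfl⟩
    · intro a ha b hb hab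
      simp only [Finset.mem_coe, Finset.mem_filter, hSdef, Finset.mem_product,
        Finset.mem_Icc] at ha hb
      obtain ⟨⟨⟨ha1, ha2⟩, ha3, ha4⟩, _⟩ := ha
      obtain ⟨⟨⟨hb1, hb2⟩, hb3, hb4⟩, _⟩ := hb
      have h1 := congrArg Prod.fst hab
      have h2 := congrArg Prod.snd hab
      simp only at h1 h2
      exact Prod.ext (by omega) (by omega)
  -- bound the bad set
  have hbad : (S.filter (fun ij : ℤ × ℤ => ¬ |ij.1 + ij.2| ≤ (p : ℤ))).card ≤ 2 * T.card := by
    calc (S.filter (fun ij : ℤ × ℤ => ¬ |ij.1 + ij.2| ≤ (p : ℤ))).card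
        ≤ (S.filter (fun ij : ℤ × ℤ => (p : ℤ) < ij.1 + ij.2) ∪
            S.filter (fun ij : ℤ × ℤ => ij.1 + ij.2 < -(p : ℤ))).card :=
          Finset.card_le_card hsub
      _ ≤ _ + _ := Finset.card_union_le _ _
      _ ≤ 2 * T.card := by omega
  have htri := strassen_triangle_card s
  have hsm : s ≤ m := by omega
  have hsn : s ≤ n := by omega
  -- final arithmetic
  have hfinal : 4 * (2 * T.card) ≤ (2 * m + 1) * (2 * n + 1) := by
    nlinarith [htri, Nat.mul_le_mul hsm hsn, hsm, hsn]
  linarith [hsplit, hbad, hfinal, hcardS]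
end

section
/- Let G be a finite group, and model the support of the group tensor T_G as the set {(a, b, ab) : a, b ∈ G} ⊆ G³. Suppose A, B, C ⊆ G are subsets such that D = {(a,b,ab) : a ∈ A, b ∈ B, ab ∈ C} has the property that any two distinct elements of D differ in all three coordinates. Then D is a tri-colored sum-free set in G, i.e., for all (a₁,b₁,c₁), (a₂,b₂,c₂), (a₃,b₃,c₃) ∈ D with a₁b₂ = c₃, the three triples are equal. -/
/-- A zeroing out of the group tensor `T_G` into an independent tensor yields a
tri-colored sum-free set in `G`. -/
theorem zeroing_out_gives_tricolored (G : Type*) [Group G] [Fintype G]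
    (A B C : Set G)
    (D : Set (G × G × G))
    (hD : D = {t : G × G × G | t.1 ∈ A ∧ t.2.1 ∈ B ∧ t.2.2 ∈ C ∧ t.1 * t.2.1 = t.2.2})
    (hind : ∀ s ∈ D, ∀ t ∈ D, s ≠ t → s.1 ≠ t.1 ∧ s.2.1 ≠ t.2.1 ∧ s.2.2 ≠ t.2.2) :
    ∀ t₁ ∈ D, ∀ t₂ ∈ D, ∀ t₃ ∈ D,
      t₁.1 * t₂.2.1 = t₃.2.2 → t₁ = t₂ ∧ t₂ = t₃ := by
  intro t₁ h₁ t₂ h₂ t₃ h₃ hmul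
  have m₁ := h₁; have m₂ := h₂; have m₃ := h₃
  rw [hD] at m₁ m₂ m₃
  set s : G × G × G := (t₁.1, t₂.2.1, t₃.2.2) with hs
  have hsD : s ∈ D := by
    rw [hD]
    exact ⟨m₁.1, m₂.2.1, m₃.2.2.1, hmul⟩
  have e₁ : s = t₁ := by
    by_contra h
    exact (hind s hsD t₁ h₁ h).1 rfl
  have e₂ : s = t₂ := by
    by_contra h
    exact (hind s hsD t₂ h₂ h).2.1 rfl
  have e₃ : s = t₃ := by
    by_contra h
    exact (hind s hsD t₃ h₃ h).2.2 rfl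
  exact ⟨e₁ ▸ e₂, e₂ ▸ e₃⟩
end

section
/- Let G be a finite abelian group with identity 1, and let q ≥ 1 be an integer. Suppose there exist injections a, b, c : {0,1,…,q+1} → G with a(0) = b(0) = c(0) = 1 such that: a(i)·b(0) = c(i) and a(0)·b(i) = c(i) for all i ∈ {1,…,q+1}, and a(i)·b(i) = c(q+1) for all i ∈ {1,…,q}. Then |G| ≥ 2q. -/
/-- If the Coppersmith–Winograd tensor `CW_q` embeds as a sub-tensor of the group
tensor of a finite abelian group `G` (encoded by the injections `a, b, c`), then
`|G| ≥ 2q`. -/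
theorem cw_not_subtensor_of_small_abelian (G : Type*) [CommGroup G] [Fintype G]
    (q : ℕ) (hq : 1 ≤ q)
    (a b c : Fin (q + 2) → G)
    (ha : Function.Injective a) (hb : Function.Injective b)
    (hc : Function.Injective c)
    (ha0 : a 0 = 1) (hb0 : b 0 = 1) (hc0 : c 0 = 1)
    (h1 : ∀ i : Fin (q + 2), i ≠ 0 → a i * b 0 = c i)
    (h2 : ∀ i : Fin (q + 2), i ≠ 0 → a 0 * b i = c i)
    (h3 : ∀ i : Fin (q + 2), i ≠ 0 → i ≠ Fin.last (q + 1) →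
      a i * b i = c (Fin.last (q + 1))) :
    2 * q ≤ Fintype.card G := by
  set g : G := c (Fin.last (q + 1)) with hg
  -- g ≠ 1
  have hlast0 : (Fin.last (q + 1)) ≠ (0 : Fin (q + 2)) := by
    simp [Fin.ext_iff, Fin.last]
  have hgne : g ≠ 1 := by
    intro h
    exact hlast0 (hc (by rw [← hg, h, hc0]))
  -- embedding of Fin q into the middle indices
  let e : Fin q → Fin (q + 2) := fun i => ⟨i.1 + 1, by omega⟩
  have he_inj : Function.Injective e := by
    intro i j h
    have : i.1 + 1 = j.1 + 1 := congrArg Fin.val h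
    exact Fin.ext (by omega)
  have he0 : ∀ i, e i ≠ 0 := by
    intro i h
    have : i.1 + 1 = 0 := congrArg Fin.val h
    omega
  have helast : ∀ i, e i ≠ Fin.last (q + 1) := by
    intro i h
    have : i.1 + 1 = q + 1 := congrArg Fin.val h
    have := i.2; omega
  have hsq : ∀ i : Fin q, a (e i) * a (e i) = g := by
    intro i
    have hab : a (e i) = b (e i) := by
      have H1 := h1 (e i) (he0 i)
      have H2 := h2 (e i) (he0 i)
      rw [hb0, mul_one] at H1
      rw [ha0, one_mul] at H2
      rw [H1, H2]
    have H := h3 (e i) (he0 i) (helast i)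
    rw [← hab] at H
    exact H
  -- base point
  let i₀ : Fin q := ⟨0, hq⟩
  let F : Fin q ⊕ Fin q → G := fun x =>
    match x with
    | Sum.inl i => a (e i)
    | Sum.inr i => a (e i) * (a (e i₀))⁻¹
  have hF : Function.Injective F := by
    intro x y h
    match x, y with
    | Sum.inl i, Sum.inl j =>
        exact congrArg Sum.inl (he_inj (ha h))
    | Sum.inr i, Sum.inr j =>
        have : a (e i) = a (e j) := mul_right_cancel h
        exact congrArg Sum.inr (he_inj (ha this))
    | Sum.inl i, Sum.inr j =>
        exfalso
        have hsqy : (a (e j) * (a (e i₀))⁻¹) * (a (e j) * (a (e i₀))⁻¹) = 1 := by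
          have := hsq j
          have h0 := hsq i₀
          rw [mul_mul_mul_comm, ← mul_inv, ← div_eq_mul_inv]
          rw [this, h0, div_self']
        have : g = 1 := by
          rw [← hsq i]
          simp only [F] at h
          rw [h]; exact hsqy
        exact hgne this
    | Sum.inr i, Sum.inl j =>
        exfalso
        have hsqy : (a (e i) * (a (e i₀))⁻¹) * (a (e i) * (a (e i₀))⁻¹) = 1 := by
          have := hsq i
          have h0 := hsq i₀
          rw [mul_mul_mul_comm, ← mul_inv, ← div_eq_mul_inv]
          rw [this, h0, div_self']
        have : g = 1 := by
          rw [← hsq j]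
          simp only [F] at h
          rw [← h]; exact hsqy
        exact hgne this
  have := Fintype.card_le_of_injective F hF
  simpa [two_mul] using this
end

section
/- Let q ≥ 2 and let f : {0,…,q−1}² → {0,…,q−1} be any function. Let p be a probability distribution on the set of triples {(i, j, f(i,j)) : i + j ≤ q − 1} such that, writing p(xᵢ) = Σ_{j : i+j ≤ q−1} p(i,j,f(i,j)), p(yⱼ) = Σ_{i : i+j ≤ q−1} p(i,j,f(i,j)), and p(z_k) = Σ_{(i,j) : i+j ≤ q−1, f(i,j)=k} p(i,j,f(i,j)), we have p(xᵢ) ≥ 1/q − κ, p(yⱼ) ≥ 1/q − κ, and p(z_k) ≥ 1/q − κ for all i, j, k ∈ {0,…,q−1}. Then for every j ∈ {0,…,q−1}, the diagonal term satisfies p(q−1−j, j, f(q−1−j, j)) ≥ 1/q − (2j+1)·q·κ. -/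
/-- Inductive mass bound on diagonal terms of a lower triangular tensor: if all
marginal masses of a probability distribution on the triples `(i, j, f(i,j))`
with `i + j ≤ q − 1` are at least `1/q − κ`, then each diagonal term `(q−1−j, j)`
carries mass at least `1/q − (2j+1)·q·κ`. -/
theorem lower_triangular_diagonal_mass (q : ℕ) (hq : 2 ≤ q)
    (f : Fin q → Fin q → Fin q) (κ : ℝ)
    (p : Fin q → Fin q → ℝ)
    (hnn : ∀ i j, 0 ≤ p i j)
    (hsupp : ∀ i j : Fin q, q ≤ (i : ℕ) + (j : ℕ) → p i j = 0)
    (hsum : ∑ i, ∑ j, p i j = 1)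
    (hx : ∀ i : Fin q, 1 / q - κ ≤ ∑ j, p i j)
    (hy : ∀ j : Fin q, 1 / q - κ ≤ ∑ i, p i j)
    (hz : ∀ k : Fin q, 1 / q - κ ≤ ∑ i, ∑ j, if f i j = k then p i j else 0) :
    ∀ j : Fin q, 1 / q - (2 * (j : ℕ) + 1) * q * κ
      ≤ p ⟨q - 1 - (j : ℕ), by omega⟩ j := by
  intro j
  have hqpos : (0:ℝ) < (q:ℝ) := by positivity
  have hJq : (j:ℕ) < q := j.isLt
  set i0 : Fin q := ⟨q - 1 - (j : ℕ), by omega⟩ with hi0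
  have hi0v : (i0 : ℕ) = q - 1 - (j : ℕ) := rfl
  -- κ is nonnegative
  have hκ : 0 ≤ κ := by
    have h1 : (q:ℝ) * (1/q - κ) ≤ ∑ i : Fin q, ∑ j', p i j' := by
      calc (q:ℝ) * (1/q - κ) = ∑ _i : Fin q, (1/q - κ) := by
            simp [Finset.sum_const, mul_comm]
            ring
        _ ≤ _ := Finset.sum_le_sum (fun i _ => hx i)
    rw [hsum] at h1
    have h2 : (q:ℝ) * (1/q) = 1 := by field_simp
    nlinarith
  -- split the row sum of row i0
  have hsplit : ∑ j', p i0 j'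
      = (∑ j' ∈ Finset.univ.filter (fun j' => j' < j), p i0 j') + p i0 j := by
    rw [← Finset.sum_filter_add_sum_filter_not Finset.univ (fun j' => j' < j) (p i0)]
    congr 1
    apply Finset.sum_eq_single_of_mem j
    · simp
    · intro b hb hbj
      have hb' : ¬ b < j := by simpa using hb
      have hjb : (j:ℕ) < (b:ℕ) := by
        rcases lt_or_eq_of_le (not_lt.mp hb') with h | h
        · exact h
        · exact absurd h.symm hbj
      exact hsupp i0 b (by omega)
  set M : ℝ := ∑ j' ∈ Finset.univ.filter (fun j' => j' < j), p i0 j' with hM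
  -- the column mass of columns < j
  have hswap : ∑ j' ∈ Finset.univ.filter (fun j' => j' < j), ∑ i, p i j'
      = ∑ i, ∑ j' ∈ Finset.univ.filter (fun j' => j' < j), p i j' :=
    Finset.sum_comm
  -- rows strictly above i0 lie entirely in columns < j
  have hrow : ∀ i : Fin q, i0 < i →
      ∑ j' ∈ Finset.univ.filter (fun j' => j' < j), p i j' = ∑ j', p i j' := by
    intro i hi
    symm
    rw [← Finset.sum_filter_add_sum_filter_not Finset.univ (fun j' => j' < j) (p i)]
    have hz : ∑ j' ∈ Finset.univ.filter (fun j' => ¬ j' < j), p i j' = 0 := by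
      apply Finset.sum_eq_zero
      intro b hb
      have hble : ¬ b < j := (Finset.mem_filter.mp hb).2
      have hb' : (j:ℕ) ≤ (b:ℕ) := Fin.le_def.mp (not_lt.mp hble)
      have hii : q - 1 - (j:ℕ) < (i:ℕ) := hi
      exact hsupp i b (by omega)
    rw [hz, add_zero]
  -- lower bound on the columns < j mass : M + j * (1/q - κ)
  have hlow : M + (j:ℕ) * (1/q - κ)
      ≤ ∑ j' ∈ Finset.univ.filter (fun j' => j' < j), ∑ i, p i j' := by
    rw [hswap]
    rw [← Finset.sum_filter_add_sum_filter_not Finset.univ (fun i => i0 < i)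
      (fun i => ∑ j' ∈ Finset.univ.filter (fun j' => j' < j), p i j')]
    have h1 : ((j:ℕ):ℝ) * (1/q - κ)
        ≤ ∑ i ∈ Finset.univ.filter (fun i => i0 < i),
            ∑ j' ∈ Finset.univ.filter (fun j' => j' < j), p i j' := by
      have hcard : (Finset.univ.filter (fun i => i0 < i)).card = (j:ℕ) := by
        have : Finset.univ.filter (fun i : Fin q => i0 < i) = Finset.Ioi i0 := by
          ext x; simp
        rw [this, Fin.card_Ioi, hi0v]
        omega
      calc ((j:ℕ):ℝ) * (1/q - κ)
          = ∑ _i ∈ Finset.univ.filter (fun i => i0 < i), (1/q - κ) := by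
            rw [Finset.sum_const, hcard]; ring
        _ ≤ _ := by
            apply Finset.sum_le_sum
            intro i hi
            rw [hrow i (Finset.mem_filter.mp hi).2]
            exact hx i
    have h2 : M ≤ ∑ i ∈ Finset.univ.filter (fun i => ¬ i0 < i),
        ∑ j' ∈ Finset.univ.filter (fun j' => j' < j), p i j' := by
      apply Finset.single_le_sum (f := fun i => ∑ j' ∈ Finset.univ.filter (fun j' => j' < j), p i j')
      · intro i _
        exact Finset.sum_nonneg fun b _ => hnn i b
      · simp
    linarith
  -- upper bound on the columns < j mass : 1 - (q - j) * (1/q - κ)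
  have hup : ∑ j' ∈ Finset.univ.filter (fun j' => j' < j), ∑ i, p i j'
      ≤ 1 - ((q:ℝ) - (j:ℕ)) * (1/q - κ) := by
    have htot : (∑ j' ∈ Finset.univ.filter (fun j' => j' < j), ∑ i, p i j')
        + (∑ j' ∈ Finset.univ.filter (fun j' => ¬ j' < j), ∑ i, p i j') = 1 := by
      rw [Finset.sum_filter_add_sum_filter_not, ← hsum]
      exact Finset.sum_comm
    have hge : ((q:ℝ) - (j:ℕ)) * (1/q - κ)
        ≤ ∑ j' ∈ Finset.univ.filter (fun j' => ¬ j' < j), ∑ i, p i j' := by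
      have hcard : (Finset.univ.filter (fun j' : Fin q => ¬ j' < j)).card = q - (j:ℕ) := by
        have : Finset.univ.filter (fun j' : Fin q => ¬ j' < j) = Finset.Ici j := by
          ext x; simp [not_lt]
        rw [this, Fin.card_Ici]
      calc ((q:ℝ) - (j:ℕ)) * (1/q - κ)
          = ∑ _j' ∈ Finset.univ.filter (fun j' : Fin q => ¬ j' < j), (1/q - κ) := by
            rw [Finset.sum_const, hcard, nsmul_eq_mul]
            push_cast [Nat.cast_sub (le_of_lt hJq)]
            ring
        _ ≤ _ := Finset.sum_le_sum fun j' _ => hy j'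
    linarith
  -- conclude M ≤ q κ
  have hMle : M ≤ (q:ℝ) * κ := by
    have h2 : (q:ℝ) * (1/q) = 1 := by field_simp
    nlinarith [hlow, hup]
  have hMnn : 0 ≤ M := Finset.sum_nonneg fun b _ => hnn i0 b
  have hrowlb : 1/q - κ ≤ M + p i0 j := by rw [← hsplit]; exact hx i0
  -- finish, splitting on whether j = 0
  rcases Nat.eq_zero_or_pos (j:ℕ) with hj0 | hj1
  · have hMz : M = 0 := by
      rw [hM]
      apply Finset.sum_eq_zero
      intro b hb
      have : (b:ℕ) < (j:ℕ) := (Finset.mem_filter.mp hb).2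
      omega
    rw [hj0]
    have h2q : (2:ℝ) ≤ (q:ℝ) := by exact_mod_cast hq
    push_cast
    nlinarith [hrowlb, hMz, mul_nonneg (by linarith : (0:ℝ) ≤ (q:ℝ)-1) hκ]
  · have hj1' : (1:ℝ) ≤ ((j:ℕ):ℝ) := by exact_mod_cast hj1
    have h2q : (2:ℝ) ≤ (q:ℝ) := by exact_mod_cast hq
    push_cast
    nlinarith [hrowlb, hMle, mul_nonneg (le_of_lt hqpos) hκ]
end
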